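/- Let E and F be categories with finite products, let f^* : F ⥤ E be a fully faithful functor preserving finite products that admits a left adjoint f_! : E ⥤ F, let J : F ⥤ F be a functor, and suppose F has weak exponentials for J, i.e. there is a functor [-,-]_J : Fᵒᵖ × F ⥤ F with bijections Hom_F(J(C) × A, B) ≅ Hom_F(C, [A, B]_J) natural in A, B, C. Define I : E ⥤ E by I(C) = f^*(J(f_!(C))). Then there are bijections Hom_E(I(C) × f^*(A), f^*(B)) ≅ Hom_E(C, f^*([A, B]_J)) natural in C, A and B; that is, f^*([A, B]_J) is a weak exponential of f^*(A) and f^*(B) with respect to I, so f^* preserves the weak implication: f^*(A →_J B) ≅ f^*(A) →_I f^*(B). -/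

import Mathlib

open CategoryTheory CategoryTheory.Limits Opposite

universe v u

/-- Let `f^* : F ⥤ E` be fully faithful, preserve finite products and admit a left
adjoint `f_!`, and let `(F, J)` have weak exponentials `[-,-]_J`, i.e. for every `A` the
functor `C ↦ J C ⨯ A` is left adjoint to `B ↦ [A, B]_J`.  With `I := f_! ⋙ J ⋙ f^*`,
there are bijections `Hom_E(I C ⨯ f^* A, f^* B) ≅ Hom_E(C, f^*([A, B]_J))` natural in
`C` and `B` (for every `A`); that is, `f^*` preserves the weak implication:
`f^*([A,B]_J)` is a weak exponential of `f^* A` and `f^* B` with respect to `I`. -/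
theorem stmt19 {E : Type u} {F : Type u} [Category.{v} E] [Category.{v} F]
    [HasFiniteProducts E] [HasFiniteProducts F]
    (fstar : F ⥤ E) [fstar.Full] [fstar.Faithful] [PreservesFiniteProducts fstar]
    (fshriek : E ⥤ F) (adj : fshriek ⊣ fstar)
    (J : F ⥤ F) (H : Fᵒᵖ × F ⥤ F)
    (hH : ∀ A : F, Nonempty ((J ⋙ prod.functor.flip.obj A) ⊣ (Functor.curry.obj H).obj (op A))) :
    ∀ A : F,
      ∃ e : ∀ (C : E) (B : F),
          (((fshriek ⋙ J ⋙ fstar) ⋙ prod.functor.flip.obj (fstar.obj A)).obj C ⟶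
              fstar.obj B) ≃
            (C ⟶ ((Functor.curry.obj H).obj (op A) ⋙ fstar).obj B),
        (∀ (C C' : E) (g : C' ⟶ C) (B : F)
            (k : ((fshriek ⋙ J ⋙ fstar) ⋙ prod.functor.flip.obj (fstar.obj A)).obj C ⟶
              fstar.obj B),
          e C' B (((fshriek ⋙ J ⋙ fstar) ⋙
              prod.functor.flip.obj (fstar.obj A)).map g ≫ k) = g ≫ e C B k) ∧
        (∀ (C : E) (B B' : F) (h : B ⟶ B')
            (k : ((fshriek ⋙ J ⋙ fstar) ⋙ prod.functor.flip.obj (fstar.obj A)).obj C ⟶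
              fstar.obj B),
          e C B' (k ≫ fstar.map h) =
            e C B k ≫ ((Functor.curry.obj H).obj (op A) ⋙ fstar).map h) := by
  intro A
  obtain ⟨adjH⟩ := hH A
  have ff : fstar.FullyFaithful := Functor.FullyFaithful.ofFullyFaithful fstar
  let adj2 : (fshriek ⋙ (J ⋙ prod.functor.flip.obj A)) ⊣
      ((Functor.curry.obj H).obj (op A) ⋙ fstar) := adj.comp adjH
  have hpre : ∀ {X Y : F} (m : X ⟶ Y) {Z : F} (n : fstar.obj Y ⟶ fstar.obj Z),
      ff.preimage (fstar.map m ≫ n) = m ≫ ff.preimage n := by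
    intro X Y m Z n
    apply ff.map_injective
    simp
  have hpost : ∀ {X Y Z : F} (n : fstar.obj X ⟶ fstar.obj Y) (m : Y ⟶ Z),
      ff.preimage (n ≫ fstar.map m) = ff.preimage n ≫ m := by
    intro X Y Z n m
    apply ff.map_injective
    simp
  refine ⟨fun C B =>
    { toFun := fun k => adj2.homEquiv C B
        (ff.preimage (prodComparison fstar (J.obj (fshriek.obj C)) A ≫ k))
      invFun := fun m => (PreservesLimitPair.iso fstar (J.obj (fshriek.obj C)) A).inv ≫
        fstar.map ((adj2.homEquiv C B).symm m)
      left_inv := fun k => by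
        simp [← PreservesLimitPair.iso_hom]
        erw [ff.map_preimage, Iso.inv_hom_id_assoc]
      right_inv := fun m => by
        simp only [← PreservesLimitPair.iso_hom, Iso.hom_inv_id_assoc,
          Functor.FullyFaithful.preimage_map, Equiv.apply_symm_apply]
        erw [Iso.hom_inv_id_assoc, Functor.FullyFaithful.preimage_map, Equiv.apply_symm_apply] }, ?_, ?_⟩
  · intro C C' g B k
    have hmap : (((fshriek ⋙ J ⋙ fstar) ⋙ prod.functor.flip.obj (fstar.obj A)).map g : _)
        = prod.map (fstar.map (J.map (fshriek.map g))) (fstar.map (𝟙 A)) := by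
      simp
      rfl
    show adj2.homEquiv C' B (ff.preimage (prodComparison fstar (J.obj (fshriek.obj C')) A ≫
        ((fshriek ⋙ J ⋙ fstar) ⋙ prod.functor.flip.obj (fstar.obj A)).map g ≫ k)) = _
    erw [hmap, ← prodComparison_natural_assoc, hpre]
    have h2 : prod.map (J.map (fshriek.map g)) (𝟙 A)
        = (fshriek ⋙ J ⋙ prod.functor.flip.obj A).map g := by simp
    erw [h2, Adjunction.homEquiv_naturality_left]
    rfl
  · intro C B B' h k
    show adj2.homEquiv C B' (ff.preimage (prodComparison fstar (J.obj (fshriek.obj C)) A ≫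
        k ≫ fstar.map h)) = _
    erw [← Category.assoc, hpost, Adjunction.homEquiv_naturality_right]
    rfl
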